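/- Let X be a [0,1]-valued random variable and α,β>0. Define Δ_{α,β} = ∫_0^1 |(α+β)·E[X·1{X≥t}] − α·P(X≥t) − t^α(1−t)^β/B(α,β)|² dt. Then Δ_{α,β} = 0 if and only if X ~ Beta(α,β). -/

import Mathlib

open MeasureTheory Set
open scoped ENNReal NNReal

noncomputable def betaFun (a b : ℝ) : ℝ := Real.Gamma a * Real.Gamma b / Real.Gamma (a + b)

lemma betaFun_pos {a b : ℝ} (ha : 0 < a) (hb : 0 < b) : 0 < betaFun a b :=
  div_pos (mul_pos (Real.Gamma_pos_of_pos ha) (Real.Gamma_pos_of_pos hb))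
    (Real.Gamma_pos_of_pos (by linarith))

lemma intervalIntegrable_bIntegrand {a b : ℝ} (ha : 0 < a) (hb : 0 < b) :
    IntervalIntegrable (fun x : ℝ => x ^ (a - 1) * (1 - x) ^ (b - 1)) volume 0 1 := by
  have h := (Complex.betaIntegral_convergent (u := (a : ℂ)) (v := (b : ℂ))
    (by simpa using ha) (by simpa using hb)).norm
  rw [intervalIntegrable_iff_integrableOn_Ioc_of_le zero_le_one] at h ⊢
  refine h.congr_fun_ae ?_
  have h1 : ∀ᵐ x ∂(volume.restrict (Ioc (0:ℝ) 1)), x ∈ Ioo (0:ℝ) 1 := by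
    have hne : ∀ᵐ x : ℝ ∂volume, x ≠ 1 := by
      rw [ae_iff]
      simpa [Set.setOf_eq_eq_singleton] using Real.volume_singleton (x := (1:ℝ))
    filter_upwards [ae_restrict_mem measurableSet_Ioc, ae_restrict_of_ae hne] with x hx hx2
    exact ⟨hx.1, lt_of_le_of_ne hx.2 hx2⟩
  filter_upwards [h1] with x hx
  have hx0 : (0:ℝ) < x := hx.1
  have hx1 : (0:ℝ) < 1 - x := by linarith [hx.2]
  rw [norm_mul]
  rw [show ((1:ℂ) - (x:ℂ)) = (((1 - x : ℝ)) : ℂ) by push_cast; ring]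
  rw [show ((a:ℂ) - 1) = (((a - 1 : ℝ)) : ℂ) by push_cast; ring]
  rw [show ((b:ℂ) - 1) = (((b - 1 : ℝ)) : ℂ) by push_cast; ring]
  rw [← Complex.ofReal_cpow hx0.le, ← Complex.ofReal_cpow hx1.le]
  simp [abs_of_nonneg (Real.rpow_nonneg hx0.le _), abs_of_nonneg (Real.rpow_nonneg hx1.le _)]

lemma betaIntegral_real {a b : ℝ} (ha : 0 < a) (hb : 0 < b) :
    ∫ x in (0:ℝ)..1, x ^ (a - 1) * (1 - x) ^ (b - 1) = betaFun a b := by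
  have key := Complex.Gamma_mul_Gamma_eq_betaIntegral (s := (a:ℂ)) (t := (b:ℂ))
    (by simpa using ha) (by simpa using hb)
  have h1 : Complex.betaIntegral a b
      = ((∫ x in (0:ℝ)..1, x ^ (a - 1) * (1 - x) ^ (b - 1) : ℝ) : ℂ) := by
    rw [Complex.betaIntegral, ← intervalIntegral.integral_ofReal]
    refine intervalIntegral.integral_congr_ae ?_
    have hne : ∀ᵐ x : ℝ ∂volume, x ≠ 1 := by
      rw [ae_iff]
      simpa [Set.setOf_eq_eq_singleton] using Real.volume_singleton (x := (1:ℝ))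
    filter_upwards [hne] with x hx1 hx
    rw [uIoc_of_le zero_le_one] at hx
    have hx0 : (0:ℝ) < x := hx.1
    have hxlt : (0:ℝ) < 1 - x := by cases lt_or_eq_of_le hx.2 with
      | inl h => linarith
      | inr h => exact absurd h hx1
    rw [show ((1:ℂ) - (x:ℂ)) = (((1 - x : ℝ)) : ℂ) by push_cast; ring]
    rw [show ((a:ℂ) - 1) = (((a - 1 : ℝ)) : ℂ) by push_cast; ring]
    rw [show ((b:ℂ) - 1) = (((b - 1 : ℝ)) : ℂ) by push_cast; ring]
    rw [← Complex.ofReal_cpow hx0.le, ← Complex.ofReal_cpow hxlt.le]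
    push_cast
    ring
  rw [h1, show ((a:ℂ) + (b:ℂ)) = (((a + b : ℝ)) : ℂ) by push_cast; ring,
    Complex.Gamma_ofReal, Complex.Gamma_ofReal, Complex.Gamma_ofReal] at key
  have key2 : Real.Gamma a * Real.Gamma b
      = Real.Gamma (a + b) * ∫ x in (0:ℝ)..1, x ^ (a - 1) * (1 - x) ^ (b - 1) := by
    exact_mod_cast key
  have hG : Real.Gamma (a + b) ≠ 0 := (Real.Gamma_pos_of_pos (by linarith)).ne'
  rw [betaFun]
  field_simp
  linarith [key2]

lemma intervalIntegrable_h_mul {a b : ℝ} (ha : 0 < a) (hb : 0 < b) {t : ℝ}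
    (ht0 : 0 ≤ t) (ht1 : t ≤ 1) :
    IntervalIntegrable (fun x : ℝ => ((a + b) * x - a) * (x ^ (a - 1) * (1 - x) ^ (b - 1)))
      volume t 1 := by
  refine ((intervalIntegrable_bIntegrand ha hb).mono_set ?_).continuousOn_mul ?_
  · rw [uIcc_of_le ht1, uIcc_of_le zero_le_one]
    exact Icc_subset_Icc ht0 le_rfl
  · exact ((continuous_const.mul continuous_id).sub continuous_const).continuousOn

lemma ftc_beta {a b : ℝ} (ha : 0 < a) (hb : 0 < b) {t : ℝ} (ht0 : 0 ≤ t) (ht1 : t ≤ 1) :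
    ∫ x in t..1, ((a + b) * x - a) * (x ^ (a - 1) * (1 - x) ^ (b - 1))
      = t ^ a * (1 - t) ^ b := by
  have hcont : ContinuousOn (fun x : ℝ => -(x ^ a * (1 - x) ^ b)) (Icc t 1) := by
    apply Continuous.continuousOn
    apply Continuous.neg
    apply Continuous.mul
    · exact continuous_iff_continuousAt.2 fun x => Real.continuousAt_rpow_const x a (Or.inr ha.le)
    · exact (continuous_iff_continuousAt.2 fun x =>
        Real.continuousAt_rpow_const x b (Or.inr hb.le)).comp
        (continuous_const.sub continuous_id)
  have hderiv : ∀ x ∈ Ioo t 1, HasDerivAt (fun x : ℝ => -(x ^ a * (1 - x) ^ b))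
      (((a + b) * x - a) * (x ^ (a - 1) * (1 - x) ^ (b - 1))) x := by
    intro x hx
    have hx0 : (0:ℝ) < x := lt_of_le_of_lt ht0 hx.1
    have hx1 : (0:ℝ) < 1 - x := by linarith [hx.2]
    have d1 : HasDerivAt (fun x : ℝ => x ^ a) (a * x ^ (a - 1)) x :=
      Real.hasDerivAt_rpow_const (Or.inl hx0.ne')
    have d2 : HasDerivAt (fun x : ℝ => (1 - x) ^ b) (b * (1 - x) ^ (b - 1) * (-1)) x := by
      have inner : HasDerivAt (fun x : ℝ => 1 - x) (-1) x := by
        simpa using (hasDerivAt_id x).const_sub 1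
      exact (Real.hasDerivAt_rpow_const (p := b) (Or.inl hx1.ne')).comp x inner
    have := (d1.mul d2).neg
    refine (this : HasDerivAt (fun x : ℝ => -(x ^ a * (1 - x) ^ b)) _ x).congr_deriv ?_
    have e1 : x ^ a = x ^ (a - 1) * x := by
      rw [← Real.rpow_add_one hx0.ne' (a - 1)]; ring_nf
    have e2 : (1 - x) ^ b = (1 - x) ^ (b - 1) * (1 - x) := by
      rw [← Real.rpow_add_one hx1.ne' (b - 1)]; ring_nf
    rw [e1, e2]
    ring
  have := intervalIntegral.integral_eq_sub_of_hasDerivAt_of_le ht1 hcont hderiv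
    (intervalIntegrable_h_mul ha hb ht0 ht1)
  rw [this]
  rw [show (1:ℝ) - 1 = 0 by ring, Real.one_rpow, Real.zero_rpow hb.ne']
  ring

noncomputable def betaMeasure (a b : ℝ) : Measure ℝ :=
  volume.withDensity fun x =>
    ENNReal.ofReal (Set.indicator (Set.Icc (0:ℝ) 1)
      (fun x => x ^ (a - 1) * (1 - x) ^ (b - 1) / betaFun a b) x)

lemma bdens_meas (a b : ℝ) :
    Measurable fun x : ℝ => Set.indicator (Set.Icc (0:ℝ) 1)
      (fun x => x ^ (a - 1) * (1 - x) ^ (b - 1) / betaFun a b) x := by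
  apply Measurable.indicator _ measurableSet_Icc
  apply Measurable.div_const
  fun_prop

lemma bdens_nonneg (a b : ℝ) (x : ℝ) (hab : 0 < betaFun a b) :
    0 ≤ Set.indicator (Set.Icc (0:ℝ) 1)
      (fun x => x ^ (a - 1) * (1 - x) ^ (b - 1) / betaFun a b) x := by
  apply Set.indicator_nonneg
  intro y hy
  have h1 : (0:ℝ) ≤ y := hy.1
  have h2 : (0:ℝ) ≤ 1 - y := by linarith [hy.2]
  positivity

lemma bdens_integrable {a b : ℝ} (ha : 0 < a) (hb : 0 < b) :
    Integrable (Set.indicator (Set.Icc (0:ℝ) 1)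
      (fun x => x ^ (a - 1) * (1 - x) ^ (b - 1) / betaFun a b)) volume := by
  rw [integrable_indicator_iff measurableSet_Icc]
  have : IntegrableOn (fun x : ℝ => x ^ (a - 1) * (1 - x) ^ (b - 1)) (Icc (0:ℝ) 1) volume := by
    rw [integrableOn_Icc_iff_integrableOn_Ioc]
    exact ((intervalIntegrable_iff_integrableOn_Ioc_of_le zero_le_one).1
      (intervalIntegrable_bIntegrand ha hb))
  exact this.div_const _

theorem betaMeasure_isProbability {a b : ℝ} (ha : 0 < a) (hb : 0 < b) :
    IsProbabilityMeasure (betaMeasure a b) := by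
  constructor
  rw [betaMeasure, withDensity_apply _ MeasurableSet.univ, Measure.restrict_univ]
  rw [← ofReal_integral_eq_lintegral_ofReal (bdens_integrable ha hb)
    (ae_of_all _ fun x => bdens_nonneg a b x (betaFun_pos ha hb))]
  rw [integral_indicator measurableSet_Icc, integral_Icc_eq_integral_Ioc,
    ← intervalIntegral.integral_of_le zero_le_one, intervalIntegral.integral_div,
    betaIntegral_real ha hb, div_self (betaFun_pos ha hb).ne', ENNReal.ofReal_one]

lemma betaMeasure_compl {a b : ℝ} :
    betaMeasure a b ((Icc (0:ℝ) 1)ᶜ) = 0 := by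
  rw [betaMeasure, withDensity_apply _ measurableSet_Icc.compl]
  have : ∀ᵐ x ∂(volume.restrict (Icc (0:ℝ) 1)ᶜ),
      ENNReal.ofReal (Set.indicator (Set.Icc (0:ℝ) 1)
        (fun x => x ^ (a - 1) * (1 - x) ^ (b - 1) / betaFun a b) x) = 0 := by
    filter_upwards [ae_restrict_mem measurableSet_Icc.compl] with x hx
    rw [Set.indicator_of_notMem hx, ENNReal.ofReal_zero]
  rw [lintegral_congr_ae this, lintegral_zero]

lemma betaMeasure_singleton {a b : ℝ} (x : ℝ) : betaMeasure a b {x} = 0 := by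
  rw [betaMeasure, withDensity_apply _ (measurableSet_singleton x)]
  exact setLIntegral_measure_zero _ _ Real.volume_singleton

lemma betaMeasure_Iic {a b : ℝ} : betaMeasure a b (Iic (0:ℝ)) = 0 := by
  refine le_antisymm ?_ zero_le
  have : Iic (0:ℝ) ⊆ Iio 0 ∪ {0} := by
    intro x hx
    rcases lt_or_eq_of_le (mem_Iic.1 hx) with h | h
    · exact Or.inl h
    · exact Or.inr (by simp [h])
  refine (measure_mono this).trans ?_
  refine (measure_union_le _ _).trans ?_
  have h1 : betaMeasure a b (Iio (0:ℝ)) = 0 := by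
    refine measure_mono_null ?_ (betaMeasure_compl (a := a) (b := b))
    intro x hx
    simp only [mem_compl_iff, mem_Icc, not_and_or, not_le]
    exact Or.inl hx
  rw [h1, betaMeasure_singleton, add_zero]

lemma nu_setIntegral {a b : ℝ} (ha : 0 < a) (hb : 0 < b) {t : ℝ} (ht0 : 0 < t) (ht1 : t ≤ 1) :
    ∫ x in Ici t, ((a + b) * x - a) ∂(betaMeasure a b)
      = t ^ a * (1 - t) ^ b / betaFun a b := by
  have hBpos := betaFun_pos ha hb
  set d : ℝ → ℝ := Set.indicator (Set.Icc (0:ℝ) 1)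
    (fun x => x ^ (a - 1) * (1 - x) ^ (b - 1) / betaFun a b) with hd
  have hdmeas : Measurable fun x => (d x).toNNReal :=
    (bdens_meas a b).real_toNNReal
  have h1 : ∫ x in Ici t, ((a + b) * x - a) ∂(betaMeasure a b)
      = ∫ x in Ici t, d x * ((a + b) * x - a) := by
    rw [betaMeasure]
    rw [show (fun x : ℝ => ENNReal.ofReal (d x)) = (fun x : ℝ => ((d x).toNNReal : ℝ≥0∞))
      from rfl]
    rw [setIntegral_withDensity_eq_setIntegral_smul hdmeas _ measurableSet_Ici]
    refine setIntegral_congr_fun measurableSet_Ici fun x _ => ?_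
    have hnn := bdens_nonneg a b x hBpos
    simp only [hd, NNReal.smul_def, Real.coe_toNNReal _ hnn, smul_eq_mul]
  rw [h1]
  have hsplit : Ici t = Icc t 1 ∪ Ioi 1 := by
    ext x
    simp only [mem_Ici, mem_union, mem_Icc, mem_Ioi]
    constructor
    · intro hx
      rcases le_or_gt x 1 with h | h
      · exact Or.inl ⟨hx, h⟩
      · exact Or.inr h
    · rintro (⟨h, _⟩ | h)
      · exact h
      · linarith
  have heqOn : EqOn (fun x : ℝ => ((a + b) * x - a) * (x ^ (a - 1) * (1 - x) ^ (b - 1)) / betaFun a b)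
      (fun x : ℝ => d x * ((a + b) * x - a)) (Icc t 1) := by
    intro x hx
    simp only [hd]
    rw [Set.indicator_of_mem (show x ∈ Icc (0:ℝ) 1 from ⟨le_trans ht0.le hx.1, hx.2⟩)]
    ring
  have hi1 : IntegrableOn (fun x : ℝ => d x * ((a + b) * x - a)) (Icc t 1) volume := by
    refine IntegrableOn.congr_fun ?_ heqOn measurableSet_Icc
    rw [integrableOn_Icc_iff_integrableOn_Ioc]
    exact (intervalIntegrable_iff_integrableOn_Ioc_of_le ht1).1
      ((intervalIntegrable_h_mul ha hb ht0.le ht1).div_const _)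
  have hi2 : IntegrableOn (fun x : ℝ => d x * ((a + b) * x - a)) (Ioi (1:ℝ)) volume := by
    refine IntegrableOn.congr_fun (integrableOn_zero) ?_ measurableSet_Ioi
    intro x hx
    simp only [hd]
    rw [Set.indicator_of_notMem (show x ∉ Icc (0:ℝ) 1 from fun hc => absurd hc.2 (not_le.2 hx))]
    simp
  rw [hsplit, setIntegral_union (by
      rw [Set.disjoint_left]
      rintro x ⟨_, hx1⟩ hx2
      exact absurd hx2 (not_lt.2 hx1)) measurableSet_Ioi hi1 hi2]
  have h3 : ∫ x in Ioi (1:ℝ), d x * ((a + b) * x - a) = 0 := by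
    rw [setIntegral_congr_fun measurableSet_Ioi (g := fun _ => (0:ℝ)) (fun x hx => by
      simp only [hd]
      rw [Set.indicator_of_notMem (show x ∉ Icc (0:ℝ) 1 from fun hc => absurd hc.2 (not_le.2 hx))]
      simp)]
    simp
  rw [h3, add_zero]
  rw [← setIntegral_congr_fun measurableSet_Icc heqOn]
  rw [integral_Icc_eq_integral_Ioc, ← intervalIntegral.integral_of_le ht1,
    intervalIntegral.integral_div, ftc_beta ha hb ht0.le ht1]

lemma setIntegral_linear (m : Measure ℝ) [IsFiniteMeasure m] {s : Set ℝ}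
    (hint : IntegrableOn (fun x => x) s m) (c e : ℝ) :
    ∫ x in s, (c * x - e) ∂m = c * (∫ x in s, x ∂m) - e * (m s).toReal := by
  rw [integral_sub (hint.const_mul c) (integrableOn_const (measure_ne_top _ _))]
  rw [integral_const_mul, setIntegral_const]
  simp [smul_eq_mul, mul_comm, measureReal_def]

lemma ext_Ici_of_ae {M N : Measure ℝ} [IsFiniteMeasure M] [IsFiniteMeasure N] {p q : ℝ}
    (hae : ∀ᵐ t : ℝ ∂volume, t ∈ Ioo p q → M (Ici t) = N (Ici t)) :
    ∀ t ∈ Ioc p q, M (Ici t) = N (Ici t) := by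
  have hdense : ∀ c t : ℝ, p ≤ c → c < t → t ≤ q →
      ∃ s : ℝ, s ∈ Ioo c t ∧ M (Ici s) = N (Ici s) := by
    intro c t hpc hct htq
    by_contra hcon
    push_neg at hcon
    have hsub : Ioo c t ⊆ {s : ℝ | ¬ (s ∈ Ioo p q → M (Ici s) = N (Ici s))} := by
      intro s hs
      simp only [mem_setOf_eq, Classical.not_imp]
      exact ⟨⟨lt_of_le_of_lt hpc hs.1, lt_of_lt_of_le hs.2 htq⟩, hcon s hs⟩
    have h0 := measure_mono_null hsub (ae_iff.mp hae)
    rw [Real.volume_Ioo] at h0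
    exact absurd h0 (by simp [ENNReal.ofReal_eq_zero]; linarith)
  intro t ht
  set u : ℕ → ℝ := fun n => t - (t - p) / (n + 2) with hu
  have htp : 0 < t - p := by linarith [ht.1]
  have hupos : ∀ n : ℕ, p < u n ∧ u n < t := by
    intro n
    have h2 : (0:ℝ) < (n:ℝ) + 2 := by positivity
    constructor
    · have : (t - p) / ((n:ℝ) + 2) < (t - p) := by
        rw [div_lt_iff₀ h2]
        nlinarith
      simp only [hu]
      linarith
    · simp only [hu]
      have : 0 < (t - p) / ((n:ℝ) + 2) := by positivity
      linarith
  have humono : Monotone u := by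
    intro i j hij
    simp only [hu]
    have h2i : (0:ℝ) < (i:ℝ) + 2 := by positivity
    have h2j : (0:ℝ) < (j:ℝ) + 2 := by positivity
    have : (t - p) / ((j:ℝ) + 2) ≤ (t - p) / ((i:ℝ) + 2) := by
      apply div_le_div_of_nonneg_left htp.le h2i
      exact_mod_cast (by exact_mod_cast Nat.add_le_add_right hij 2 : ((i:ℕ)+2:ℕ) ≤ (j:ℕ)+2)
    linarith
  have hulim : Filter.Tendsto u Filter.atTop (nhds t) := by
    have h1 : Filter.Tendsto (fun n : ℕ => (t - p) / ((n:ℝ) + 2)) Filter.atTop (nhds 0) := by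
      apply Filter.Tendsto.div_atTop tendsto_const_nhds
      exact Filter.tendsto_atTop_add_const_right _ 2 tendsto_natCast_atTop_atTop
    have h2 : Filter.Tendsto (fun n : ℕ => t - (t - p) / ((n:ℝ) + 2)) Filter.atTop
        (nhds (t - 0)) := tendsto_const_nhds.sub h1
    simpa [hu] using h2
  have hInter : (⋂ n, Ici (u n)) = Ici t := by
    ext x
    simp only [mem_iInter, mem_Ici]
    constructor
    · intro hx
      exact le_of_tendsto hulim (Filter.Eventually.of_forall hx)
    · intro hx n
      exact le_trans (hupos n).2.le hx
  have hanti : Antitone fun n => Ici (u n) := fun i j hij => Ici_subset_Ici.2 (humono hij)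
  have hM : Filter.Tendsto (fun n => M (Ici (u n))) Filter.atTop (nhds (M (Ici t))) := by
    have := tendsto_measure_iInter_atTop (μ := M)
      (fun n => measurableSet_Ici.nullMeasurableSet) hanti ⟨0, measure_ne_top _ _⟩
    rwa [hInter] at this
  have hN : Filter.Tendsto (fun n => N (Ici (u n))) Filter.atTop (nhds (N (Ici t))) := by
    have := tendsto_measure_iInter_atTop (μ := N)
      (fun n => measurableSet_Ici.nullMeasurableSet) hanti ⟨0, measure_ne_top _ _⟩
    rwa [hInter] at this
  refine le_antisymm ?_ ?_
  · refine ge_of_tendsto hN (Filter.Eventually.of_forall fun n => ?_)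
    obtain ⟨s, hs, hseq⟩ := hdense (u n) t (hupos n).1.le (hupos n).2 ht.2
    calc M (Ici t) ≤ M (Ici s) := measure_mono (Ici_subset_Ici.2 hs.2.le)
    _ = N (Ici s) := hseq
    _ ≤ N (Ici (u n)) := measure_mono (Ici_subset_Ici.2 hs.1.le)
  · refine ge_of_tendsto hM (Filter.Eventually.of_forall fun n => ?_)
    obtain ⟨s, hs, hseq⟩ := hdense (u n) t (hupos n).1.le (hupos n).2 ht.2
    calc N (Ici t) ≤ N (Ici s) := measure_mono (Ici_subset_Ici.2 hs.2.le)
    _ = M (Ici s) := hseq.symm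
    _ ≤ M (Ici (u n)) := measure_mono (Ici_subset_Ici.2 hs.1.le)

lemma restrict_eq_of_withDensity {m1 m2 : Measure ℝ} {s : Set ℝ} (hs : MeasurableSet s)
    {g : ℝ → ℝ≥0∞} (hg : Measurable g) (hpos : ∀ x ∈ s, g x ≠ 0) (hfin : ∀ x, g x ≠ ∞)
    (h : (m1.restrict s).withDensity g = (m2.restrict s).withDensity g) :
    m1.restrict s = m2.restrict s := by
  have key : ∀ m : Measure ℝ,
      ((m.restrict s).withDensity g).withDensity (fun x => (g x)⁻¹) = m.restrict s := by
    intro m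
    rw [← withDensity_mul (g := fun x => (g x)⁻¹) _ hg hg.inv]
    have hone : (g * fun x => (g x)⁻¹) =ᵐ[m.restrict s] 1 := by
      filter_upwards [ae_restrict_mem hs] with x hx
      simp only [Pi.mul_apply, Pi.inv_apply, Pi.one_apply]
      exact ENNReal.mul_inv_cancel (hpos x hx) (hfin x)
    rw [withDensity_congr_ae hone, withDensity_one]
  rw [← key m1, ← key m2, h]

set_option maxHeartbeats 2000000 in
lemma measure_eq_of_ae {a b : ℝ} (ha : 0 < a) (hb : 0 < b)
    (μ ν : Measure ℝ) [hμP : IsProbabilityMeasure μ] [hνP : IsProbabilityMeasure ν]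
    (hμs : μ ((Icc (0:ℝ) 1)ᶜ) = 0) (hνs : ν ((Icc (0:ℝ) 1)ᶜ) = 0)
    (hν0 : ν (Iic (0:ℝ)) = 0) (hνx : ν {a / (a + b)} = 0)
    (heq : ∀ᵐ t : ℝ ∂volume, t ∈ Ioc (0:ℝ) 1 →
      ∫ x in Ici t, ((a + b) * x - a) ∂μ = ∫ x in Ici t, ((a + b) * x - a) ∂ν) :
    μ = ν := by
  set x₀ : ℝ := a / (a + b) with hx₀def
  have hab : 0 < a + b := by linarith
  have hx₀pos : 0 < x₀ := div_pos ha hab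
  have hx₀lt1 : x₀ < 1 := by rw [hx₀def, div_lt_one hab]; linarith
  have hhx₀ : (a + b) * x₀ - a = 0 := by rw [hx₀def]; field_simp; ring
  have hμae : ∀ᵐ x ∂μ, x ∈ Icc (0:ℝ) 1 := by rw [ae_iff]; exact hμs
  have hνae : ∀ᵐ x ∂ν, x ∈ Icc (0:ℝ) 1 := by rw [ae_iff]; exact hνs
  have hint : ∀ (m : Measure ℝ), IsProbabilityMeasure m → (∀ᵐ x ∂m, x ∈ Icc (0:ℝ) 1) →
      Integrable (fun x : ℝ => (a + b) * x - a) m := by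
    intro m _ hm
    refine Integrable.mono' (integrable_const ((a + b) + a)) ?_ ?_
    · exact Continuous.aestronglyMeasurable (by continuity)
    · filter_upwards [hm] with x hx
      rw [Real.norm_eq_abs, abs_le]
      constructor <;> nlinarith [hx.1, hx.2]
  have hintμ := hint μ hμP hμae
  have hintν := hint ν hνP hνae
  have hlfin : ∀ (m : Measure ℝ), IsProbabilityMeasure m → ∀ (f : ℝ → ℝ) (C : ℝ) (s : Set ℝ),
      (∀ᵐ x ∂m, f x ≤ C) → ∫⁻ x, ENNReal.ofReal (f x) ∂(m.restrict s) ≠ ∞ := by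
    intro m hmP f C s hm
    have hb1 : ∫⁻ x, ENNReal.ofReal (f x) ∂(m.restrict s) ≤ ENNReal.ofReal C := by
      calc ∫⁻ x, ENNReal.ofReal (f x) ∂(m.restrict s)
          ≤ ∫⁻ _, ENNReal.ofReal C ∂(m.restrict s) := lintegral_mono_ae (by
            filter_upwards [ae_restrict_of_ae hm] with x hx
            exact ENNReal.ofReal_le_ofReal hx)
        _ = ENNReal.ofReal C * (m.restrict s) univ := lintegral_const _
        _ ≤ ENNReal.ofReal C * 1 := by
            gcongr
            rw [Measure.restrict_apply_univ]
            exact prob_le_one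
        _ = ENNReal.ofReal C := mul_one _
    exact ne_top_of_le_ne_top ENNReal.ofReal_ne_top hb1
  have happly : ∀ (m : Measure ℝ) (u s : Set ℝ), MeasurableSet u → MeasurableSet s →
      ∀ g : ℝ → ℝ≥0∞, ((m.restrict u).withDensity g) s = ∫⁻ x in s ∩ u, g x ∂m := by
    intro m u s hu hs g
    rw [withDensity_apply _ hs, Measure.restrict_restrict hs]
  -- Part A : the measures agree on (x₀, ∞)
  set g1 : ℝ → ℝ≥0∞ := fun x => ENNReal.ofReal ((a + b) * x - a) with hg1
  have hg1meas : Measurable g1 := ENNReal.measurable_ofReal.comp (by fun_prop)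
  set MA := (μ.restrict (Ioi x₀)).withDensity g1 with hMA
  set NA := (ν.restrict (Ioi x₀)).withDensity g1 with hNA
  haveI hMAfin : IsFiniteMeasure MA := isFiniteMeasure_withDensity
    (hlfin μ hμP _ b _ (hμae.mono fun x hx => by nlinarith [hx.2]))
  haveI hNAfin : IsFiniteMeasure NA := isFiniteMeasure_withDensity
    (hlfin ν hνP _ b _ (hνae.mono fun x hx => by nlinarith [hx.2]))
  have hIciA : ∀ t : ℝ, MA (Ici t) = NA (Ici t) := by
    have haeA : ∀ᵐ t : ℝ ∂volume, t ∈ Ioo x₀ 1 → MA (Ici t) = NA (Ici t) := by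
      filter_upwards [heq] with t hti htmem
      have ht0 : (0:ℝ) < t := lt_trans hx₀pos htmem.1
      have hIci : Ici t ∩ Ioi x₀ = Ici t :=
        inter_eq_left.2 fun x hx => lt_of_lt_of_le htmem.1 hx
      have hnn : ∀ (m : Measure ℝ), ∀ᵐ x ∂(m.restrict (Ici t)), 0 ≤ (a + b) * x - a := by
        intro m
        filter_upwards [ae_restrict_mem measurableSet_Ici] with x hx
        have : x₀ ≤ x := le_trans htmem.1.le hx
        rw [hx₀def, div_le_iff₀ hab] at this
        nlinarith
      rw [hMA, hNA, happly _ _ _ measurableSet_Ioi measurableSet_Ici g1,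
        happly _ _ _ measurableSet_Ioi measurableSet_Ici g1, hIci, hg1,
        ← ofReal_integral_eq_lintegral_ofReal hintμ.integrableOn (hnn μ),
        ← ofReal_integral_eq_lintegral_ofReal hintν.integrableOn (hnn ν),
        hti ⟨ht0, htmem.2.le⟩]
    have hIoc := ext_Ici_of_ae haeA
    intro t
    rcases lt_or_ge 1 t with h1t | ht1
    · have hz : ∀ (m : Measure ℝ), m ((Icc (0:ℝ) 1)ᶜ) = 0 →
          ∫⁻ x in Ici t ∩ Ioi x₀, g1 x ∂m = 0 := by
        intro m hms
        apply setLIntegral_measure_zero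
        apply measure_mono_null _ hms
        intro x hx
        simp only [mem_compl_iff, mem_Icc, not_and_or, not_le]
        exact Or.inr (lt_of_lt_of_le h1t hx.1)
      rw [hMA, hNA, happly _ _ _ measurableSet_Ioi measurableSet_Ici g1,
        happly _ _ _ measurableSet_Ioi measurableSet_Ici g1, hz μ hμs, hz ν hνs]
    rcases lt_or_ge x₀ t with hx₀t | htx₀
    · exact hIoc t ⟨hx₀t, ht1⟩
    · have hIci : Ici t ∩ Ioi x₀ = Ioi x₀ :=
        inter_eq_right.2 fun x hx => le_trans htx₀ (le_of_lt hx)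
      set v : ℕ → ℝ := fun n => x₀ + (1 - x₀) / (n + 2) with hv
      have hvmem : ∀ n : ℕ, v n ∈ Ioc x₀ 1 := by
        intro n
        have h2 : (0:ℝ) < (n:ℝ) + 2 := by positivity
        constructor
        · simp only [hv]
          have : 0 < (1 - x₀) / ((n:ℝ) + 2) := by
            apply div_pos (by linarith) h2
          linarith
        · simp only [hv]
          have : (1 - x₀) / ((n:ℝ) + 2) ≤ (1 - x₀) := by
            apply div_le_self (by linarith)
            linarith
          linarith
      have hvU : (⋃ n, Ici (v n)) = Ioi x₀ := by
        ext x
        simp only [mem_iUnion, mem_Ici, mem_Ioi]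
        constructor
        · rintro ⟨n, hn⟩
          exact lt_of_lt_of_le (hvmem n).1 hn
        · intro hx
          obtain ⟨n, hn⟩ := exists_nat_gt ((1 - x₀) / (x - x₀))
          refine ⟨n, ?_⟩
          have hxx : 0 < x - x₀ := by linarith
          have h1x : (0:ℝ) ≤ 1 - x₀ := by linarith
          have h2 : (0:ℝ) < (n:ℝ) + 2 := by positivity
          have : (1 - x₀) / ((n:ℝ) + 2) ≤ x - x₀ := by
            rw [div_le_iff₀ h2]
            rw [div_lt_iff₀ hxx] at hn
            nlinarith
          simp only [hv]
          linarith
      have hmono : Monotone fun n : ℕ => Ici (v n) := by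
        intro i j hij
        apply Ici_subset_Ici.2
        simp only [hv]
        have h2i : (0:ℝ) < (i:ℝ) + 2 := by positivity
        have hij' : ((i:ℝ) + 2) ≤ ((j:ℝ) + 2) := by
          have : (i:ℝ) ≤ (j:ℝ) := by exact_mod_cast hij
          linarith
        have : (1 - x₀) / ((j:ℝ) + 2) ≤ (1 - x₀) / ((i:ℝ) + 2) :=
          div_le_div_of_nonneg_left (by linarith) h2i hij'
        linarith
      have hself : ∀ (m : Measure ℝ),
          ((m.restrict (Ioi x₀)).withDensity g1) (Ici t)
            = ((m.restrict (Ioi x₀)).withDensity g1) (⋃ n, Ici (v n)) := by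
        intro m
        rw [happly _ _ _ measurableSet_Ioi measurableSet_Ici g1,
          happly _ _ _ measurableSet_Ioi (hvU ▸ measurableSet_Ioi) g1, hIci, hvU, inter_self]
      calc MA (Ici t) = MA (⋃ n, Ici (v n)) := hself μ
        _ = ⨆ n, MA (Ici (v n)) := hmono.measure_iUnion
        _ = ⨆ n, NA (Ici (v n)) := iSup_congr fun n => hIoc _ (hvmem n)
        _ = NA (⋃ n, Ici (v n)) := hmono.measure_iUnion.symm
        _ = NA (Ici t) := (hself ν).symm
  have hMAeq : MA = NA := Measure.ext_of_Ici MA NA hIciA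
  have hrA : μ.restrict (Ioi x₀) = ν.restrict (Ioi x₀) := by
    refine restrict_eq_of_withDensity measurableSet_Ioi hg1meas ?_ (fun x => ENNReal.ofReal_ne_top)
      hMAeq
    intro x hx
    rw [hg1]
    simp only [ne_eq, ENNReal.ofReal_eq_zero, not_le]
    have hx' : a / (a + b) < x := hx
    rw [div_lt_iff₀ hab] at hx'
    nlinarith
  -- integral over Ici x₀ agrees
  have hIcix₀ : ∫ x in Ici x₀, ((a + b) * x - a) ∂μ = ∫ x in Ici x₀, ((a + b) * x - a) ∂ν := by
    have hsing : ∀ (m : Measure ℝ), ∫ x in {x₀}, ((a + b) * x - a) ∂m = 0 := by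
      intro m
      rw [setIntegral_congr_fun (measurableSet_singleton x₀) (g := fun _ => (0:ℝ))
        (fun x hx => by rw [mem_singleton_iff] at hx; rw [hx]; exact hhx₀)]
      simp
    have hset : Ici x₀ = {x₀} ∪ Ioi x₀ := by
      ext y
      simp only [mem_Ici, mem_union, mem_singleton_iff, mem_Ioi]
      constructor
      · intro hy
        rcases eq_or_lt_of_le hy with h | h
        · exact Or.inl h.symm
        · exact Or.inr h
      · rintro (h | h)
        · exact h.ge
        · exact h.le
    have hdisj : Disjoint ({x₀} : Set ℝ) (Ioi x₀) := by
      rw [Set.disjoint_left]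
      rintro y hy hy2
      rw [mem_singleton_iff] at hy
      rw [hy] at hy2
      exact lt_irrefl _ (mem_Ioi.1 hy2)
    rw [hset,
      setIntegral_union hdisj measurableSet_Ioi hintμ.integrableOn hintμ.integrableOn,
      setIntegral_union hdisj measurableSet_Ioi hintν.integrableOn hintν.integrableOn,
      hsing μ, hsing ν, zero_add, zero_add, hrA]
  -- a.e. equality on the left part
  have heqB : ∀ᵐ t : ℝ ∂volume, t ∈ Ioo (0:ℝ) x₀ →
      ∫ x in Ici t ∩ Iio x₀, ((a + b) * x - a) ∂μ
        = ∫ x in Ici t ∩ Iio x₀, ((a + b) * x - a) ∂ν := by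
    filter_upwards [heq] with t hti htmem
    have hti' := hti ⟨htmem.1, le_trans htmem.2.le hx₀lt1.le⟩
    have hsplitt : ∀ (m : Measure ℝ), Integrable (fun x : ℝ => (a + b) * x - a) m →
        ∫ x in Ici t, ((a + b) * x - a) ∂m
          = ∫ x in Ici t ∩ Iio x₀, ((a + b) * x - a) ∂m
            + ∫ x in Ici x₀, ((a + b) * x - a) ∂m := by
      intro m hm
      have hun : Ici t = (Ici t ∩ Iio x₀) ∪ Ici x₀ := by
        ext y
        simp only [mem_union, mem_inter_iff, mem_Ici, mem_Iio]
        constructor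
        · intro hy
          rcases lt_or_ge y x₀ with h | h
          · exact Or.inl ⟨hy, h⟩
          · exact Or.inr h
        · rintro (⟨h, _⟩ | h)
          · exact h
          · exact le_trans htmem.2.le h
      have hdisj : Disjoint (Ici t ∩ Iio x₀) (Ici x₀) := by
        rw [Set.disjoint_left]
        rintro y ⟨_, hy⟩ hy2
        exact absurd (mem_Ici.1 hy2) (not_le.2 hy)
      conv_lhs => rw [hun]
      exact setIntegral_union hdisj measurableSet_Ici hm.integrableOn hm.integrableOn
    rw [hsplitt μ hintμ, hsplitt ν hintν, hIcix₀] at hti'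
    linarith
  -- Part B : agree on (0, x₀)
  set g2 : ℝ → ℝ≥0∞ := fun x => ENNReal.ofReal (a - (a + b) * x) with hg2
  have hg2meas : Measurable g2 := ENNReal.measurable_ofReal.comp (by fun_prop)
  set MB := (μ.restrict (Ioo 0 x₀)).withDensity g2 with hMB
  set NB := (ν.restrict (Ioo 0 x₀)).withDensity g2 with hNB
  haveI hMBfin : IsFiniteMeasure MB := isFiniteMeasure_withDensity
    (hlfin μ hμP _ a _ (hμae.mono fun x hx => by nlinarith [hx.1]))
  haveI hNBfin : IsFiniteMeasure NB := isFiniteMeasure_withDensity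
    (hlfin ν hνP _ a _ (hνae.mono fun x hx => by nlinarith [hx.1]))
  have hneg : ∀ (m : Measure ℝ) (s : Set ℝ), Integrable (fun x : ℝ => (a + b) * x - a) m →
      ∫ x in s, (a - (a + b) * x) ∂m = - ∫ x in s, ((a + b) * x - a) ∂m := by
    intro m s hm
    rw [← integral_neg]
    congr 1
    funext x
    ring
  have hIciB : ∀ t : ℝ, MB (Ici t) = NB (Ici t) := by
    have haeB : ∀ᵐ t : ℝ ∂volume, t ∈ Ioo (0:ℝ) x₀ → MB (Ici t) = NB (Ici t) := by
      filter_upwards [heqB] with t hti htmem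
      have hIci : Ici t ∩ Ioo 0 x₀ = Ici t ∩ Iio x₀ := by
        ext y
        simp only [mem_inter_iff, mem_Ici, mem_Ioo, mem_Iio]
        constructor
        · rintro ⟨h1, _, h3⟩
          exact ⟨h1, h3⟩
        · rintro ⟨h1, h2⟩
          exact ⟨h1, lt_of_lt_of_le htmem.1 h1, h2⟩
      have hnn : ∀ (m : Measure ℝ), ∀ᵐ x ∂(m.restrict (Ici t ∩ Iio x₀)),
          0 ≤ a - (a + b) * x := by
        intro m
        filter_upwards [ae_restrict_mem (measurableSet_Ici.inter measurableSet_Iio)] with x hx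
        have hx' : x < a / (a + b) := hx.2
        rw [lt_div_iff₀ hab] at hx'
        nlinarith
      have hmi : ∀ (m : Measure ℝ), Integrable (fun x : ℝ => (a + b) * x - a) m →
          IntegrableOn (fun x : ℝ => a - (a + b) * x) (Ici t ∩ Iio x₀) m := by
        intro m hm
        have : (fun x : ℝ => a - (a + b) * x) = fun x : ℝ => -((a + b) * x - a) := by
          funext x; ring
        rw [this]
        exact hm.neg.integrableOn
      rw [hMB, hNB, happly _ _ _ (measurableSet_Ioo) measurableSet_Ici g2,
        happly _ _ _ (measurableSet_Ioo) measurableSet_Ici g2, hIci, hg2,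
        ← ofReal_integral_eq_lintegral_ofReal (hmi μ hintμ) (hnn μ),
        ← ofReal_integral_eq_lintegral_ofReal (hmi ν hintν) (hnn ν),
        hneg μ _ hintμ, hneg ν _ hintν, hti htmem]
    have hIocB := ext_Ici_of_ae haeB
    intro t
    rcases lt_or_ge x₀ t with hx₀t | htx₀
    · -- empty intersection
      have hemp : Ici t ∩ Ioo 0 x₀ = ∅ := by
        ext y
        simp only [mem_inter_iff, mem_Ici, mem_Ioo, mem_empty_iff_false, iff_false, not_and]
        intro h1 _
        linarith
      rw [hMB, hNB, happly _ _ _ measurableSet_Ioo measurableSet_Ici g2,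
        happly _ _ _ measurableSet_Ioo measurableSet_Ici g2, hemp]
      simp
    rcases lt_or_ge 0 t with h0t | ht0
    · exact hIocB t ⟨h0t, htx₀⟩
    · -- t ≤ 0
      have hIci : Ici t ∩ Ioo 0 x₀ = Ioo 0 x₀ :=
        inter_eq_right.2 fun x hx => le_trans ht0 hx.1.le
      set w : ℕ → ℝ := fun n => x₀ / (n + 2) with hw
      have hwmem : ∀ n : ℕ, w n ∈ Ioc (0:ℝ) x₀ := by
        intro n
        have h2 : (0:ℝ) < (n:ℝ) + 2 := by positivity
        exact ⟨div_pos hx₀pos h2, div_le_self hx₀pos.le (by linarith)⟩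
      have hwU : (⋃ n, Ici (w n)) ∩ Ioo 0 x₀ = Ioo 0 x₀ := by
        apply inter_eq_right.2
        intro x hx
        simp only [mem_iUnion, mem_Ici]
        obtain ⟨n, hn⟩ := exists_nat_gt (x₀ / x)
        refine ⟨n, ?_⟩
        have hx0 : 0 < x := hx.1
        have h2 : (0:ℝ) < (n:ℝ) + 2 := by positivity
        rw [div_le_iff₀ h2]
        rw [div_lt_iff₀ hx0] at hn
        nlinarith [hx₀pos]
      have hmono : Monotone fun n : ℕ => Ici (w n) := by
        intro i j hij
        apply Ici_subset_Ici.2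
        simp only [hw]
        have h2i : (0:ℝ) < (i:ℝ) + 2 := by positivity
        have hij' : ((i:ℝ) + 2) ≤ ((j:ℝ) + 2) := by
          have : (i:ℝ) ≤ (j:ℝ) := by exact_mod_cast hij
          linarith
        exact div_le_div_of_nonneg_left hx₀pos.le h2i hij'
      have hself : ∀ (m : Measure ℝ),
          ((m.restrict (Ioo 0 x₀)).withDensity g2) (Ici t)
            = ((m.restrict (Ioo 0 x₀)).withDensity g2) (⋃ n, Ici (w n)) := by
        intro m
        rw [happly _ _ _ measurableSet_Ioo measurableSet_Ici g2,
          happly _ _ _ measurableSet_Ioo (MeasurableSet.iUnion fun n => measurableSet_Ici) g2,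
          hIci, hwU]
      calc MB (Ici t) = MB (⋃ n, Ici (w n)) := hself μ
        _ = ⨆ n, MB (Ici (w n)) := hmono.measure_iUnion
        _ = ⨆ n, NB (Ici (w n)) := iSup_congr fun n => hIocB _ (hwmem n)
        _ = NB (⋃ n, Ici (w n)) := hmono.measure_iUnion.symm
        _ = NB (Ici t) := (hself ν).symm
  have hMBeq : MB = NB := Measure.ext_of_Ici MB NB hIciB
  have hrB : μ.restrict (Ioo 0 x₀) = ν.restrict (Ioo 0 x₀) := by
    refine restrict_eq_of_withDensity measurableSet_Ioo hg2meas ?_ (fun x => ENNReal.ofReal_ne_top)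
      hMBeq
    intro x hx
    rw [hg2]
    simp only [ne_eq, ENNReal.ofReal_eq_zero, not_le]
    have hx' : x < a / (a + b) := hx.2
    rw [lt_div_iff₀ hab] at hx'
    nlinarith
  -- final assembly
  set U : Set ℝ := Ioo 0 x₀ ∪ Ioi x₀ with hUdef
  have hUmeas : MeasurableSet U := measurableSet_Ioo.union measurableSet_Ioi
  have hdisjU : Disjoint (Ioo (0:ℝ) x₀) (Ioi x₀) := by
    rw [Set.disjoint_left]
    rintro y ⟨_, h1⟩ h2
    exact absurd h2 (not_lt.2 h1.le)
  have hU : μ U = ν U := by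
    rw [hUdef, measure_union hdisjU measurableSet_Ioi, measure_union hdisjU measurableSet_Ioi,
      ← Measure.restrict_apply_univ (μ := μ) (s := Ioo 0 x₀)]
    rw [← Measure.restrict_apply_univ (μ := μ) (s := Ioi x₀),
      ← Measure.restrict_apply_univ (μ := ν) (s := Ioo 0 x₀),
      ← Measure.restrict_apply_univ (μ := ν) (s := Ioi x₀), hrA, hrB]
  have hνUc : ν Uᶜ = 0 := by
    have hsub : Uᶜ ⊆ Iic 0 ∪ {x₀} := by
      intro y hy
      simp only [hUdef, mem_compl_iff, mem_union, mem_Ioo, mem_Ioi, not_or, not_and, not_lt] at hy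
      rcases le_or_gt y 0 with h | h
      · exact Or.inl h
      · right
        have h1 := hy.1 h
        have h2 := hy.2
        exact mem_singleton_iff.2 (le_antisymm h2 h1)
    refine measure_mono_null hsub ?_
    refine le_antisymm ((measure_union_le _ _).trans ?_) zero_le
    rw [hν0, hνx]
    simp
  have hμUc : μ Uᶜ = 0 := by
    have h1 : μ U + μ Uᶜ = 1 := by
      rw [measure_add_measure_compl hUmeas]
      exact measure_univ
    have h2 : ν U + ν Uᶜ = 1 := by
      rw [measure_add_measure_compl hUmeas]
      exact measure_univ
    rw [hU] at h1
    rw [hνUc, add_zero] at h2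
    have h3 : ν U + μ Uᶜ = ν U + 0 := by rw [add_zero, h1, h2]
    exact (ENNReal.add_right_inj (measure_ne_top ν U)).1 h3
  ext s hs
  have h1 : μ (s ∩ U) + μ (s \ U) = μ s := measure_inter_add_diff s hUmeas
  have h2 : ν (s ∩ U) + ν (s \ U) = ν s := measure_inter_add_diff s hUmeas
  have hμd : μ (s \ U) = 0 := measure_mono_null (fun x hx => hx.2) hμUc
  have hνd : ν (s \ U) = 0 := measure_mono_null (fun x hx => hx.2) hνUc
  have hsU : μ (s ∩ U) = ν (s ∩ U) := by
    have hrwU : s ∩ U = (s ∩ Ioo 0 x₀) ∪ (s ∩ Ioi x₀) := by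
      rw [hUdef, inter_union_distrib_left]
    have hd2 : Disjoint (s ∩ Ioo 0 x₀) (s ∩ Ioi x₀) :=
      hdisjU.mono inter_subset_right inter_subset_right
    rw [hrwU, measure_union hd2 (hs.inter measurableSet_Ioi),
      measure_union hd2 (hs.inter measurableSet_Ioi),
      ← Measure.restrict_apply hs, ← Measure.restrict_apply hs,
      ← Measure.restrict_apply hs, ← Measure.restrict_apply hs,
      hrA, hrB]
  rw [← h1, ← h2, hμd, hνd, hsU]

set_option maxHeartbeats 1000000 in
theorem delta_eq_zero_iff_beta
    {Ω : Type*} [MeasurableSpace Ω] (P : Measure Ω) [IsProbabilityMeasure P]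
    (X : Ω → ℝ) (hX : Measurable X) (hrange : ∀ ω, X ω ∈ Set.Icc (0:ℝ) 1)
    (α β : ℝ) (hα : 0 < α) (hβ : 0 < β) :
    (∫ t in (0:ℝ)..1,
        |(α + β) * (∫ ω in {w : Ω | t ≤ X w}, X ω ∂P)
          - α * (P {w : Ω | t ≤ X w}).toReal
          - t ^ α * (1 - t) ^ β / betaFun α β| ^ 2) = 0 ↔
      Measure.map X P = betaMeasure α β := by
  haveI hνP : IsProbabilityMeasure (betaMeasure α β) := betaMeasure_isProbability hα hβ
  have hBpos := betaFun_pos hα hβ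
  set μ := Measure.map X P with hμdef
  haveI hμP : IsProbabilityMeasure μ := Measure.isProbabilityMeasure_map hX.aemeasurable
  have hμs : μ ((Icc (0:ℝ) 1)ᶜ) = 0 := by
    rw [hμdef, Measure.map_apply hX measurableSet_Icc.compl]
    have hempty : X ⁻¹' (Icc (0:ℝ) 1)ᶜ = ∅ :=
      eq_empty_iff_forall_notMem.2 fun ω hω => hω (hrange ω)
    rw [hempty]
    exact measure_empty
  have hμae : ∀ᵐ x ∂μ, x ∈ Icc (0:ℝ) 1 := by rw [ae_iff]; exact hμs
  have hintxμ : Integrable (fun x : ℝ => x) μ := by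
    refine Integrable.mono' (integrable_const 1) aestronglyMeasurable_id ?_
    filter_upwards [hμae] with x hx
    rw [Real.norm_eq_abs, abs_le]
    exact ⟨by linarith [hx.1], hx.2⟩
  have hAt : ∀ t : ℝ, ∫ ω in {w | t ≤ X w}, X ω ∂P = ∫ x in Ici t, x ∂μ := by
    intro t
    rw [hμdef, setIntegral_map (f := fun x : ℝ => x) measurableSet_Ici
      measurable_id.aestronglyMeasurable hX.aemeasurable]
    rfl
  have hPt : ∀ t : ℝ, P {w | t ≤ X w} = μ (Ici t) := by
    intro t
    rw [hμdef, Measure.map_apply hX measurableSet_Ici]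
    rfl
  have hlin : ∀ t : ℝ, (α + β) * (∫ x in Ici t, x ∂μ) - α * (μ (Ici t)).toReal
      = ∫ x in Ici t, ((α + β) * x - α) ∂μ :=
    fun t => (setIntegral_linear μ hintxμ.integrableOn (α + β) α).symm
  have hrw : ∀ t : ℝ,
      (α + β) * (∫ ω in {w : Ω | t ≤ X w}, X ω ∂P) - α * (P {w : Ω | t ≤ X w}).toReal
        - t ^ α * (1 - t) ^ β / betaFun α β
      = (∫ x in Ici t, ((α + β) * x - α) ∂μ) - t ^ α * (1 - t) ^ β / betaFun α β := by
    intro t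
    rw [hAt, hPt, hlin]
  have hiff : (∫ t in (0:ℝ)..1,
        |(α + β) * (∫ ω in {w : Ω | t ≤ X w}, X ω ∂P)
          - α * (P {w : Ω | t ≤ X w}).toReal
          - t ^ α * (1 - t) ^ β / betaFun α β| ^ 2)
      = ∫ t in (0:ℝ)..1,
        |(∫ x in Ici t, ((α + β) * x - α) ∂μ) - t ^ α * (1 - t) ^ β / betaFun α β| ^ 2 :=
    intervalIntegral.integral_congr fun t _ => by rw [hrw]
  rw [hiff]
  constructor
  · intro h0
    rw [intervalIntegral.integral_of_le zero_le_one] at h0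
    have hA : Antitone fun t : ℝ => ∫ x in Ici t, x ∂μ := by
      intro s t hst
      apply setIntegral_mono_set hintxμ.integrableOn
      · filter_upwards [ae_restrict_of_ae hμae] with x hx using hx.1
      · exact HasSubset.Subset.eventuallyLE (Ici_subset_Ici.2 hst)
    have hB : Antitone fun t : ℝ => (μ (Ici t)).toReal := by
      intro s t hst
      exact ENNReal.toReal_mono (measure_ne_top μ _) (measure_mono (Ici_subset_Ici.2 hst))
    have hmeasF : Measurable fun t : ℝ => ∫ x in Ici t, ((α + β) * x - α) ∂μ := by
      have hfe : (fun t : ℝ => ∫ x in Ici t, ((α + β) * x - α) ∂μ)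
          = fun t : ℝ => (α + β) * (∫ x in Ici t, x ∂μ) - α * (μ (Ici t)).toReal :=
        funext fun t => (hlin t).symm
      rw [hfe]
      exact (measurable_const.mul hA.measurable).sub (measurable_const.mul hB.measurable)
    have hmeasR : Measurable fun t : ℝ => t ^ α * (1 - t) ^ β / betaFun α β := by fun_prop
    have hmeasW : Measurable fun t : ℝ =>
        |(∫ x in Ici t, ((α + β) * x - α) ∂μ) - t ^ α * (1 - t) ^ β / betaFun α β| ^ 2 :=
      ((hmeasF.sub hmeasR).abs).pow_const 2
    have hFb : ∀ t : ℝ, |∫ x in Ici t, ((α + β) * x - α) ∂μ| ≤ (α + β) + α := by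
      intro t
      have hbd : ∀ᵐ x ∂(μ.restrict (Ici t)), ‖(α + β) * x - α‖ ≤ (α + β) + α := by
        filter_upwards [ae_restrict_of_ae hμae] with x hx
        rw [Real.norm_eq_abs, abs_le]
        constructor <;> nlinarith [hx.1, hx.2]
      have h1 := norm_integral_le_of_norm_le (integrable_const ((α + β) + α)) hbd
      rw [Real.norm_eq_abs] at h1
      refine h1.trans ?_
      rw [integral_const, smul_eq_mul, measureReal_def]
      have h2 : ((μ.restrict (Ici t)) univ).toReal ≤ 1 := by
        rw [Measure.restrict_apply_univ]
        exact ENNReal.toReal_mono ENNReal.one_ne_top prob_le_one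
      nlinarith [ENNReal.toReal_nonneg (a := (μ.restrict (Ici t)) univ)]
    have hRb : ∀ t ∈ Ioc (0:ℝ) 1, |t ^ α * (1 - t) ^ β / betaFun α β| ≤ 1 / betaFun α β := by
      intro t ht
      have h1t : (0:ℝ) ≤ 1 - t := by linarith [ht.2]
      rw [abs_div, abs_of_nonneg hBpos.le,
        abs_of_nonneg (mul_nonneg (Real.rpow_nonneg ht.1.le α) (Real.rpow_nonneg h1t β))]
      gcongr
      calc t ^ α * (1 - t) ^ β ≤ 1 * 1 := by
            apply mul_le_mul (Real.rpow_le_one ht.1.le ht.2 hα.le)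
              (Real.rpow_le_one h1t (by linarith [ht.1]) hβ.le)
              (Real.rpow_nonneg h1t β) zero_le_one
        _ = 1 := mul_one 1
    have hInt : IntegrableOn (fun t : ℝ =>
        |(∫ x in Ici t, ((α + β) * x - α) ∂μ) - t ^ α * (1 - t) ^ β / betaFun α β| ^ 2)
        (Ioc (0:ℝ) 1) volume := by
      refine Integrable.mono' (integrable_const (((α + β) + α + 1 / betaFun α β) ^ 2))
        hmeasW.aestronglyMeasurable.restrict ?_
      filter_upwards [ae_restrict_mem measurableSet_Ioc] with t ht
      rw [Real.norm_eq_abs, abs_of_nonneg (by positivity)]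
      have h1 := hFb t
      have h2 := hRb t ht
      have h3 : |(∫ x in Ici t, ((α + β) * x - α) ∂μ) - t ^ α * (1 - t) ^ β / betaFun α β|
          ≤ (α + β) + α + 1 / betaFun α β := by
        refine (abs_sub _ _).trans ?_
        linarith
      calc |(∫ x in Ici t, ((α + β) * x - α) ∂μ) - t ^ α * (1 - t) ^ β / betaFun α β| ^ 2
          ≤ ((α + β) + α + 1 / betaFun α β) ^ 2 := by
            apply pow_le_pow_left₀ (abs_nonneg _) h3
        _ = _ := rfl
    have h00 := (integral_eq_zero_iff_of_nonneg_ae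
      (Filter.Eventually.of_forall fun t => by positivity) hInt).1 h0
    have hae0 : ∀ᵐ t : ℝ ∂volume, t ∈ Ioc (0:ℝ) 1 →
        ∫ x in Ici t, ((α + β) * x - α) ∂μ = t ^ α * (1 - t) ^ β / betaFun α β := by
      rw [← ae_restrict_iff' measurableSet_Ioc]
      filter_upwards [h00] with t ht
      have h1 : |(∫ x in Ici t, ((α + β) * x - α) ∂μ)
          - t ^ α * (1 - t) ^ β / betaFun α β| = 0 :=
        pow_eq_zero_iff (two_ne_zero) |>.1 ht
      have h2 := abs_eq_zero.1 h1
      linarith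
    have heq2 : ∀ᵐ t : ℝ ∂volume, t ∈ Ioc (0:ℝ) 1 →
        ∫ x in Ici t, ((α + β) * x - α) ∂μ
          = ∫ x in Ici t, ((α + β) * x - α) ∂(betaMeasure α β) :=
      hae0.mono fun t h ht => (h ht).trans (nu_setIntegral hα hβ ht.1 ht.2).symm
    exact measure_eq_of_ae hα hβ μ (betaMeasure α β) hμs betaMeasure_compl betaMeasure_Iic
      (betaMeasure_singleton _) heq2
  · intro hmap
    rw [intervalIntegral.integral_of_le zero_le_one]
    rw [setIntegral_congr_fun measurableSet_Ioc (g := fun _ => (0:ℝ)) ?_]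
    · simp
    · intro t ht
      show |(∫ x in Ici t, ((α + β) * x - α) ∂μ) - t ^ α * (1 - t) ^ β / betaFun α β| ^ 2 = (0:ℝ)
      rw [hmap, nu_setIntegral hα hβ ht.1 ht.2, sub_self, abs_zero]
      norm_num
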